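/- arXiv:1801.06954 — 3 statements merged into one kernel-verified Lean document; each statement's English description precedes it below -/
import Mathlib

section
/- For every n ≥ 3, the (n-2)×(n-2) Hankel matrix S_n with entries (S_n)_{ij} = 1/((i+j)!) for 1 ≤ i, j ≤ n-2 (i.e., entries 1/2!, 1/3!, ..., 1/(2n-4)! arranged so the (i,j) entry is 1/(i+j)!) is invertible. -/
/-!
Multiplying row `i` of the Hankel matrix `(1 / (a + i + j)!)` by `(a + i + m - 1)!` and
reversing its columns gives the matrix whose `j`-th column holds the values at the nodes
`i = 0, …, m - 1` of the rising factorial `(X + c)(X + c + 1)⋯(X + c + j - 1)`, `c = a + m - j`,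
a monic polynomial of degree `j`.
Such a matrix has the determinant of the Vandermonde matrix of the nodes, which is nonzero.
-/

open Matrix Polynomial
open scoped Nat

theorem det_of_eval_monic_ne_zero {R : Type*} [CommRing R] [IsDomain R] {m : ℕ} {v : Fin m → R}
    (hv : Function.Injective v) {p : Fin m → R[X]} (h_deg : ∀ j, (p j).natDegree = j)
    (h_monic : ∀ j, (p j).Monic) :
    (of fun i j => (p j).eval (v i)).det ≠ 0 := by
  rw [← det_eval_matrixOfPolynomials_eq_det_vandermonde v p h_deg h_monic]
  exact det_vandermonde_ne_zero_iff.mpr hv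

section

variable {K : Type*} [Field K] [CharZero K]

theorem cast_factorial_add_div_factorial (x k : ℕ) :
    ((x + k)! : K) / x ! = (ascPochhammer K k).eval ((x + 1 : ℕ) : K) := by
  rw [← ascPochhammer_eval_cast, ascPochhammer_nat_eq_ascFactorial,
    ← Nat.factorial_mul_ascFactorial, Nat.cast_mul,
    mul_div_cancel_left₀ _ (Nat.cast_ne_zero.mpr x.factorial_ne_zero)]

theorem det_inv_factorial_hankel_ne_zero (a m : ℕ) :
    (of fun i j : Fin m => (1 : K) / (a + i + j)!).det ≠ 0 := by
  set A : Matrix (Fin m) (Fin m) K := of fun i j => 1 / (a + i + j)!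
  set p : Fin m → K[X] := fun j => (ascPochhammer K j).comp (X + C ((a + m - j : ℕ) : K))
  have h_scaled :
      diagonal (fun i : Fin m => ((a + i + (m - 1))! : K)) * A.submatrix id Fin.revPerm =
        of fun (i j : Fin m) => (p j).eval ((i : ℕ) : K) := by
    ext i j
    have hj := j.isLt
    have h_rev : ((Fin.revPerm j : Fin m) : ℕ) = m - 1 - j := by simp [Fin.val_rev]; omega
    have h_top : a + i + (m - 1) = (a + i + (m - 1 - j)) + j := by omega
    have h_node : a + i + (m - 1 - j) + 1 = i + (a + m - j) := by omega
    simp only [diagonal_mul, submatrix_apply, id_eq, of_apply, A, p, h_rev, eval_comp, eval_add,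
      eval_X, eval_C, h_top, ← div_eq_mul_one_div, cast_factorial_add_div_factorial, h_node,
      Nat.cast_add]
  have h_eval : (of fun (i j : Fin m) => (p j).eval ((i : ℕ) : K)).det ≠ 0 :=
    det_of_eval_monic_ne_zero (Nat.cast_injective.comp Fin.val_injective)
      (fun j => by
        simp only [p, natDegree_comp, ascPochhammer_natDegree, natDegree_X_add_C, mul_one])
      (fun j => (monic_ascPochhammer K j).comp_X_add_C _)
  rw [← h_scaled, det_mul, det_permute'] at h_eval
  intro hA
  simp [hA] at h_eval

end

theorem stmt_1_general (n : ℕ) :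
    IsUnit (Matrix.of (fun i j : Fin (n - 2) =>
      (1 : ℝ) / (Nat.factorial ((i : ℕ) + 1 + ((j : ℕ) + 1))))) := by
  have h_entries : (fun i j : Fin (n - 2) => (1 : ℝ) / ((i : ℕ) + 1 + ((j : ℕ) + 1))!)
      = fun i j : Fin (n - 2) => (1 : ℝ) / (2 + (i : ℕ) + j)! := by
    funext i j
    rw [show (i : ℕ) + 1 + ((j : ℕ) + 1) = 2 + i + j by omega]
  rw [Matrix.isUnit_iff_isUnit_det, isUnit_iff_ne_zero, h_entries]
  exact det_inv_factorial_hankel_ne_zero 2 (n - 2)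

/-- The `(n-2) × (n-2)` Hankel matrix with `(i,j)` entry `1/(i+j)!`
(1-based indices `i, j = 1, …, n-2`, so entries range over `1/2!, …, 1/(2n-4)!`)
is invertible for every `n ≥ 3`. -/
theorem stmt_1 (n : ℕ) (hn : 3 ≤ n) :
    IsUnit (Matrix.of (fun i j : Fin (n - 2) =>
      (1 : ℝ) / (Nat.factorial ((i : ℕ) + 1 + ((j : ℕ) + 1))))) :=
  stmt_1_general n
end

section
/- Let w_1 : [t_0, T) → ℝ be absolutely continuous with w_1(t) ≠ 0 on [t_0, T), lim_{t→T} w_1(t) = 0, T < ∞, and suppose H : [t_0, T] → ℝ is bounded below, non-increasing, and satisfies Ḣ(t) ≤ −k ẇ_1(t)² / w_1(t)² a.e. for some k > 0. Then a contradiction follows; i.e., no such finite T exists. Concretely: for any t_1 ∈ [t_0, T), choosing t' maximizing w_1² on [t_1, T], one has H(T) − H(t') ≤ −k/(T − t'), which is unbounded below as t_1 → T, contradicting boundedness of H. -/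
/-!
The quantity `ψ t = H t - 2k log |w₁ t| - k t` is non-increasing on `[t₀, T)`: wherever `w₁ ≠ 0`,
`ψ' = Ḣ - 2k ẇ₁/w₁ - k ≤ -k (ẇ₁/w₁ + 1)² ≤ 0`. Since `H` is bounded below, `ψ t ≤ ψ t₀` bounds
`log |w₁ t|` from below on `[t₀, T)`, so `|w₁|` stays away from `0` there, and by continuity
`w₁ T ≠ 0`.
-/

open Set Real

theorem hasDerivAt_sub_mul_log_abs_sub {f w : ℝ → ℝ} {k t : ℝ} (hf : DifferentiableAt ℝ f t)
    (hw : DifferentiableAt ℝ w t) (hw0 : w t ≠ 0) :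
    HasDerivAt (fun s => f s - 2 * k * log |w s| - k * s)
      (deriv f t - 2 * k * (deriv w t / w t) - k) t := by
  simp only [log_abs]
  exact (hf.hasDerivAt.fun_sub ((hw.hasDerivAt.log hw0).const_mul (2 * k))).fun_sub
    (hasDerivAt_const_mul k)

theorem sub_two_mul_div_sub_nonpos_of_le {k a w d : ℝ} (hk : 0 ≤ k) (hw : w ≠ 0)
    (hd : d ≤ -k * a ^ 2 / w ^ 2) : d - 2 * k * (a / w) - k ≤ 0 := by
  have hcompleted : -k * a ^ 2 / w ^ 2 - 2 * k * (a / w) - k = -k * (a / w + 1) ^ 2 := by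
    field_simp
    ring
  nlinarith [mul_nonneg hk (sq_nonneg (a / w + 1))]

theorem antitoneOn_sub_mul_log_abs_sub {s : Set ℝ} (hs : Convex ℝ s) {f w : ℝ → ℝ} {k : ℝ}
    (hk : 0 ≤ k) (hf : ∀ t ∈ s, DifferentiableAt ℝ f t) (hw : ∀ t ∈ s, DifferentiableAt ℝ w t)
    (hw0 : ∀ t ∈ s, w t ≠ 0) (hfw : ∀ t ∈ s, deriv f t ≤ -k * deriv w t ^ 2 / w t ^ 2) :
    AntitoneOn (fun t => f t - 2 * k * log |w t| - k * t) s := by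
  have hderiv t (ht : t ∈ s) := hasDerivAt_sub_mul_log_abs_sub (k := k) (hf t ht) (hw t ht) (hw0 t ht)
  refine antitoneOn_of_deriv_nonpos hs
    (fun t ht => (hderiv t ht).continuousAt.continuousWithinAt)
    (fun t ht => (hderiv t (interior_subset ht)).differentiableAt.differentiableWithinAt)
    (fun t ht => ?_)
  have ht := interior_subset ht
  rw [(hderiv t ht).deriv]
  exact sub_two_mul_div_sub_nonpos_of_le hk (hw0 t ht) (hfw t ht)

theorem stmt_9_general (t0 T : ℝ) (htT : t0 < T) (w1 H : ℝ → ℝ) (k : ℝ) (hk : 0 < k)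
    (hw1cont : ContinuousOn w1 (Set.Icc t0 T))
    (hw1diff : ∀ t ∈ Set.Ico t0 T, DifferentiableAt ℝ w1 t)
    (hw1ne : ∀ t ∈ Set.Ico t0 T, w1 t ≠ 0)
    (hw1T : w1 T = 0)
    (hHdiff : ∀ t ∈ Set.Ico t0 T, DifferentiableAt ℝ H t)
    (hHbdd : ∃ c : ℝ, ∀ t ∈ Set.Icc t0 T, c ≤ H t)
    (hHder : ∀ t ∈ Set.Ico t0 T,
      deriv H t ≤ -k * (deriv w1 t) ^ 2 / (w1 t) ^ 2) :
    False := by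
  obtain ⟨c, hc⟩ := hHbdd
  have hψ := antitoneOn_sub_mul_log_abs_sub (convex_Ico t0 T) hk.le hHdiff hw1diff hw1ne hHder
  set m := (c - k * T - (H t0 - 2 * k * log |w1 t0| - k * t0)) / (2 * k)
  have hlog : ∀ t ∈ Ico t0 T, m ≤ log |w1 t| := fun t ht => by
    have hψt := hψ (left_mem_Ico.2 htT) ht ht.1
    have hct := hc t (Ico_subset_Icc_self ht)
    have hkt := mul_le_mul_of_nonneg_left ht.2.le hk.le
    rw [div_le_iff₀ (by positivity)]
    linarith
  have hTmem : T ∈ closure (Ico t0 T) := closure_Ico htT.ne ▸ right_mem_Icc.2 htT.le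
  have hT : exp m ≤ |w1 T| :=
    ContinuousWithinAt.closure_le (f := fun _ => exp m) (g := fun t => |w1 t|) hTmem
      continuousWithinAt_const ((hw1cont T (right_mem_Icc.2 htT.le)).mono Ico_subset_Icc_self).abs
      fun t ht => (exp_le_exp.2 (hlog t ht)).trans_eq (exp_log (abs_pos.2 (hw1ne t ht)))
  rw [hw1T, abs_zero] at hT
  exact (exp_pos m).not_ge hT

/-- Finite-time escape prevention: there is no absolutely-continuous `w₁` on
`[t₀, T)`, nonvanishing there with `w₁(T) = 0` (`T < ∞`), together with a
bounded-below, non-increasing `H` whose derivative satisfies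
`Ḣ(t) ≤ −k ẇ₁(t)²/w₁(t)²` with `k > 0`.  Formally, such data yields `False`. -/
theorem stmt_9 (t0 T : ℝ) (htT : t0 < T) (w1 H : ℝ → ℝ) (k : ℝ) (hk : 0 < k)
    (hw1cont : ContinuousOn w1 (Set.Icc t0 T))
    (hw1diff : ∀ t ∈ Set.Ico t0 T, DifferentiableAt ℝ w1 t)
    (hw1ne : ∀ t ∈ Set.Ico t0 T, w1 t ≠ 0)
    (hw1T : w1 T = 0)
    (hHcont : ContinuousOn H (Set.Icc t0 T))
    (hHdiff : ∀ t ∈ Set.Ico t0 T, DifferentiableAt ℝ H t)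
    (hHmono : AntitoneOn H (Set.Icc t0 T))
    (hHbdd : ∃ c : ℝ, ∀ t ∈ Set.Icc t0 T, c ≤ H t)
    (hHder : ∀ t ∈ Set.Ico t0 T,
      deriv H t ≤ -k * (deriv w1 t) ^ 2 / (w1 t) ^ 2) :
    False :=
  stmt_9_general t0 T htT w1 H k hk hw1cont hw1diff hw1ne hw1T hHdiff hHbdd hHder
end

section
/- If L = diag(l_1, ..., l_n) with all l_i > 0 and the equation L w = (∂(f_w^{-1})/∂w)^⊤ (Q_z^⊥)^⊤ a(w) holds for some vector a(w) ∈ ℝ^{n-2}, where Q_z^⊥ is the chained-structure annihilator evaluated at z = f_w^{-1}(w), then w_1 = w_2 = 0, i.e. the only solution (w_1, w_2) is the trivial one. -/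
open Matrix

/-- Inverse discontinuous coordinate change (0-based indices). -/
noncomputable def fwInv (n : ℕ) (w : Fin n → ℝ) : Fin n → ℝ := fun j =>
  if (j : ℕ) = 0 then w j
  else if (j : ℕ) = 1 then
    w ⟨0, j.pos⟩ * w j +
      ∑ i : Fin n, if 2 ≤ (i : ℕ) then
        (1 / (Nat.factorial ((i : ℕ) - 1))) * w ⟨0, j.pos⟩ ^ ((i : ℕ) - 1) * w i
      else 0
  else
    ∑ i : Fin n, if 2 ≤ (i : ℕ) then
      (1 / (Nat.factorial ((i : ℕ) + (j : ℕ) - 2))) *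
        w ⟨0, j.pos⟩ ^ ((i : ℕ) + (j : ℕ) - 2) * w i
    else 0

/-- Jacobian matrix of `f_w⁻¹`: entry `(i,j)` is `∂ z_i / ∂ w_j`. -/
noncomputable def fwInvJac (n : ℕ) (w : Fin n → ℝ) : Matrix (Fin n) (Fin n) ℝ :=
  fun i j => deriv (fun t => fwInv n (Function.update w j t) i) (w j)

/-- The chained-structure left annihilator `Q_z^⊥(z)`: 0-based row `j` has
`-z_{j+1}` in column 0, `0` in column 1, and `1` in column `j+2`. -/
def Qzperp (n : ℕ) (z : Fin n → ℝ) : Matrix (Fin (n - 2)) (Fin n) ℝ :=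
  fun j c =>
    if (c : ℕ) = 0 then -(z ⟨(j : ℕ) + 1, by have := j.isLt; omega⟩)
    else if (c : ℕ) = (j : ℕ) + 2 then 1 else 0

lemma upd_ne {n : ℕ} (w : Fin n → ℝ) (j i : Fin n) (t : ℝ) (h : (i : ℕ) ≠ (j : ℕ)) :
    Function.update w j t i = w i :=
  Function.update_of_ne (fun hh => h (by rw [hh])) t w

lemma upd_eq {n : ℕ} (w : Fin n → ℝ) (j i : Fin n) (t : ℝ) (h : (i : ℕ) = (j : ℕ)) :
    Function.update w j t i = t := by
  have : i = j := Fin.ext h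
  rw [this, Function.update_self]

/-- Column 1 of the Jacobian vanishes off the diagonal entry. -/
lemma jac_col1_zero (n : ℕ) (hn : 3 ≤ n) (w : Fin n → ℝ) (k : Fin n) (hk : (k : ℕ) ≠ 1) :
    fwInvJac n w k ⟨1, (Nat.lt_of_lt_of_le (by decide) hn)⟩ = 0 := by
  have hconst : (fun t => fwInv n (Function.update w ⟨1, by omega⟩ t) k) =
      fun _ => fwInv n w k := by
    funext t
    unfold fwInv
    by_cases h0 : (k : ℕ) = 0
    · rw [if_pos h0, if_pos h0, upd_ne]
      simp only [hk]  -- dummy; will adjust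
      · omega
    · rw [if_neg h0, if_neg h0, if_neg hk, if_neg hk]
      apply Finset.sum_congr rfl
      intro i _
      by_cases hi : 2 ≤ (i : ℕ)
      · rw [if_pos hi, if_pos hi, upd_ne, upd_ne] <;> simp <;> omega
      · rw [if_neg hi, if_neg hi]
  rw [fwInvJac, hconst, deriv_const]
lemma jac00 (n : ℕ) (hn : 3 ≤ n) (w : Fin n → ℝ) :
    fwInvJac n w ⟨0, (Nat.lt_of_lt_of_le (by decide) hn)⟩ ⟨0, (Nat.lt_of_lt_of_le (by decide) hn)⟩ = 1 := by
  have hfun : (fun t => fwInv n (Function.update w ⟨0, by omega⟩ t) ⟨0, by omega⟩) =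
      fun t : ℝ => t := by
    funext t
    unfold fwInv
    rw [if_pos rfl, upd_eq]
    rfl
  rw [fwInvJac, hfun, deriv_id'']

lemma jac_col0_ge2 (n : ℕ) (hn : 3 ≤ n) (w : Fin n → ℝ) (k : Fin n) (hk : 2 ≤ (k : ℕ)) :
    fwInvJac n w k ⟨0, (Nat.lt_of_lt_of_le (by decide) hn)⟩ =
      ∑ i : Fin n, if 2 ≤ (i : ℕ) then
        (1 / (Nat.factorial ((i : ℕ) + (k : ℕ) - 3))) *
          w ⟨0, (Nat.lt_of_lt_of_le (by decide) hn)⟩ ^ ((i : ℕ) + (k : ℕ) - 3) * w i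
      else 0 := by
  have hfun : (fun t => fwInv n (Function.update w ⟨0, by omega⟩ t) k) =
      fun t : ℝ => ∑ i : Fin n, if 2 ≤ (i : ℕ) then
        (1 / (Nat.factorial ((i : ℕ) + (k : ℕ) - 2))) * t ^ ((i : ℕ) + (k : ℕ) - 2) * w i
      else 0 := by
    funext t
    unfold fwInv
    rw [if_neg (by omega), if_neg (by omega)]
    apply Finset.sum_congr rfl
    intro i _
    by_cases hi : 2 ≤ (i : ℕ)
    · rw [if_pos hi, if_pos hi, upd_eq _ _ _ _ rfl, upd_ne]
      simp only [Fin.val_mk]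
      omega
    · rw [if_neg hi, if_neg hi]
  rw [fwInvJac, hfun]
  set x : ℝ := w ⟨0, by omega⟩ with hx
  have H : HasDerivAt (fun t : ℝ => ∑ i : Fin n, if 2 ≤ (i : ℕ) then
        (1 / (Nat.factorial ((i : ℕ) + (k : ℕ) - 2))) * t ^ ((i : ℕ) + (k : ℕ) - 2) * w i
      else 0)
      (∑ i : Fin n, if 2 ≤ (i : ℕ) then
        (1 / (Nat.factorial ((i : ℕ) + (k : ℕ) - 3))) * x ^ ((i : ℕ) + (k : ℕ) - 3) * w i
      else 0) x := by
    apply HasDerivAt.fun_sum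
    intro i _
    by_cases hi : 2 ≤ (i : ℕ)
    · simp only [if_pos hi]
      obtain ⟨p, hp1, hp2⟩ : ∃ p, (i : ℕ) + (k : ℕ) - 2 = p + 1 ∧ (i : ℕ) + (k : ℕ) - 3 = p :=
        ⟨(i : ℕ) + (k : ℕ) - 3, by omega, rfl⟩
      rw [hp1, hp2]
      have h1 : HasDerivAt (fun t : ℝ => t ^ (p + 1)) ((p + 1 : ℕ) * x ^ p) x := by
        simpa using hasDerivAt_pow (p + 1) x
      have h2 := (h1.const_mul ((1 : ℝ) / (Nat.factorial (p + 1)))).mul_const (w i)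
      convert h2 using 1
      case e'_4 => rfl
      have hfac : (Nat.factorial (p + 1) : ℝ) = (p + 1) * Nat.factorial p := by
        rw [Nat.factorial_succ]; push_cast; ring
      have hne : (Nat.factorial p : ℝ) ≠ 0 := Nat.cast_ne_zero.mpr (Nat.factorial_ne_zero p)
      rw [hfac]
      push_cast
      field_simp
    · simp only [if_neg hi]
      exact hasDerivAt_const _ _
  exact H.deriv

lemma key_row (n : ℕ) (hn : 3 ≤ n) (w : Fin n → ℝ) (j : Fin (n - 2)) :
    ∑ k : Fin n, Qzperp n (fwInv n w) j k * fwInvJac n w k ⟨0, (Nat.lt_of_lt_of_le (by decide) hn)⟩ =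
      if (j : ℕ) = 0 then -(w ⟨0, (Nat.lt_of_lt_of_le (by decide) hn)⟩ * w ⟨1, (Nat.lt_of_lt_of_le (by decide) hn)⟩) else 0 := by
  have hjlt := j.isLt
  set c0 : Fin n := ⟨0, by omega⟩ with hc0
  set J : Fin n → ℝ := fun k => fwInvJac n w k c0 with hJ
  set z : Fin n → ℝ := fwInv n w with hz
  have hsplit : ∀ k : Fin n, Qzperp n z j k * J k =
      (if k = c0 then -(z ⟨(j : ℕ) + 1, by omega⟩) * J k else 0) +
      (if k = (⟨(j : ℕ) + 2, by omega⟩ : Fin n) then J k else 0) := by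
    intro k
    by_cases h0 : (k : ℕ) = 0
    · have hk0 : k = c0 := by rw [hc0]; exact Fin.ext h0
      have hne : ¬ (k = (⟨(j : ℕ) + 2, by omega⟩ : Fin n)) := by
        rw [Fin.ext_iff]; simp only [Fin.val_mk]; omega
      rw [Qzperp]
      simp only [if_pos h0, if_pos hk0, if_neg hne]
      ring
    · have hne0 : ¬ (k = c0) := by
        rw [hc0, Fin.ext_iff]; simp only [Fin.val_mk]; omega
      by_cases h2 : (k : ℕ) = (j : ℕ) + 2
      · have hk2 : k = (⟨(j : ℕ) + 2, by omega⟩ : Fin n) := Fin.ext h2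
        rw [Qzperp]
        simp only [if_neg h0, if_pos h2, if_pos hk2, if_neg hne0]
        ring
      · have hne2 : ¬ (k = (⟨(j : ℕ) + 2, by omega⟩ : Fin n)) := by
          rw [Fin.ext_iff]; simp only [Fin.val_mk]; omega
        rw [Qzperp]
        simp only [if_neg h0, if_neg h2, if_neg hne0, if_neg hne2]
        ring
  rw [Finset.sum_congr rfl (fun k _ => hsplit k), Finset.sum_add_distrib,
    Finset.sum_ite_eq' Finset.univ c0 (fun k => -(z ⟨(j : ℕ) + 1, by omega⟩) * J k),
    Finset.sum_ite_eq' Finset.univ (⟨(j : ℕ) + 2, by omega⟩ : Fin n) J,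
    if_pos (Finset.mem_univ _), if_pos (Finset.mem_univ _)]
  have hJ0 : J c0 = 1 := jac00 n hn w
  have hJk : J ⟨(j : ℕ) + 2, by omega⟩ =
      ∑ i : Fin n, if 2 ≤ (i : ℕ) then
        (1 / (Nat.factorial ((i : ℕ) + ((j : ℕ) + 2) - 3))) *
          w c0 ^ ((i : ℕ) + ((j : ℕ) + 2) - 3) * w i
      else 0 := jac_col0_ge2 n hn w ⟨(j : ℕ) + 2, by omega⟩ (by simp)
  rw [hJ0, mul_one, hJk]
  by_cases hj : (j : ℕ) = 0
  · rw [if_pos hj]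
    have hz1 : z ⟨(j : ℕ) + 1, by omega⟩ =
        w c0 * w ⟨(j : ℕ) + 1, by omega⟩ +
          ∑ i : Fin n, if 2 ≤ (i : ℕ) then
            (1 / (Nat.factorial ((i : ℕ) - 1))) * w c0 ^ ((i : ℕ) - 1) * w i
          else 0 := by
      rw [hz]
      show fwInv n w _ = _
      rw [fwInv]
      simp only [Fin.val_mk]
      rw [if_neg (by omega), if_pos (by omega)]
    rw [hz1]
    have hsum : (∑ i : Fin n, if 2 ≤ (i : ℕ) then
        (1 / (Nat.factorial ((i : ℕ) + ((j : ℕ) + 2) - 3))) *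
          w c0 ^ ((i : ℕ) + ((j : ℕ) + 2) - 3) * w i
        else 0) =
        ∑ i : Fin n, if 2 ≤ (i : ℕ) then
          (1 / (Nat.factorial ((i : ℕ) - 1))) * w c0 ^ ((i : ℕ) - 1) * w i
        else 0 := by
      apply Finset.sum_congr rfl
      intro i _
      by_cases hi : 2 ≤ (i : ℕ)
      · rw [if_pos hi, if_pos hi,
          show (i : ℕ) + ((j : ℕ) + 2) - 3 = (i : ℕ) - 1 by omega]
      · rw [if_neg hi, if_neg hi]
    rw [hsum]
    rw [show (⟨(j : ℕ) + 1, by omega⟩ : Fin n) = ⟨1, by omega⟩ from Fin.ext (by simp [hj])]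
    ring
  · rw [if_neg hj]
    have hz1 : z ⟨(j : ℕ) + 1, by omega⟩ =
        ∑ i : Fin n, if 2 ≤ (i : ℕ) then
          (1 / (Nat.factorial ((i : ℕ) + ((j : ℕ) + 1) - 2))) *
            w c0 ^ ((i : ℕ) + ((j : ℕ) + 1) - 2) * w i
        else 0 := by
      rw [hz]
      show fwInv n w _ = _
      rw [fwInv]
      simp only [Fin.val_mk]
      rw [if_neg (by omega), if_neg (by omega)]
    rw [hz1]
    have hsum : (∑ i : Fin n, if 2 ≤ (i : ℕ) then
        (1 / (Nat.factorial ((i : ℕ) + ((j : ℕ) + 2) - 3))) *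
          w c0 ^ ((i : ℕ) + ((j : ℕ) + 2) - 3) * w i
        else 0) =
        ∑ i : Fin n, if 2 ≤ (i : ℕ) then
          (1 / (Nat.factorial ((i : ℕ) + ((j : ℕ) + 1) - 2))) *
            w c0 ^ ((i : ℕ) + ((j : ℕ) + 1) - 2) * w i
        else 0 := by
      apply Finset.sum_congr rfl
      intro i _
      by_cases hi : 2 ≤ (i : ℕ)
      · rw [if_pos hi, if_pos hi,
          show (i : ℕ) + ((j : ℕ) + 2) - 3 = (i : ℕ) + ((j : ℕ) + 1) - 2 by omega]
      · rw [if_neg hi, if_neg hi]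
    rw [hsum]
    ring

/-- If `L = diag(l₁,…,l_n)` with all `l_i > 0` and
`L w = (∂ f_w⁻¹/∂w)ᵀ (Q_z^⊥)ᵀ a` for some `a` (annihilator evaluated at
`z = f_w⁻¹(w)`), then `w₂ = 0` and `w₁ = 0`. -/
theorem stmt_10 (n : ℕ) (hn : 3 ≤ n) (l : Fin n → ℝ) (hl : ∀ i, 0 < l i)
    (w : Fin n → ℝ) (a : Fin (n - 2) → ℝ)
    (heq : ∀ i : Fin n, l i * w i =
      ((fwInvJac n w)ᵀ.mulVec ((Qzperp n (fwInv n w))ᵀ.mulVec a)) i) :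
    w ⟨1, by omega⟩ = 0 ∧ w ⟨0, by omega⟩ = 0 := by
  have hc1 : (1 : ℕ) < n := by omega
  have hc0 : (0 : ℕ) < n := by omega
  set c0 : Fin n := ⟨0, hc0⟩ with hc0'
  set c1 : Fin n := ⟨1, hc1⟩ with hc1'
  set v : Fin n → ℝ := (Qzperp n (fwInv n w))ᵀ.mulVec a with hv
  have hv1 : v c1 = 0 := by
    rw [hv, Matrix.mulVec]
    show (Qzperp n (fwInv n w))ᵀ c1 ⬝ᵥ a = 0
    rw [dotProduct]
    apply Finset.sum_eq_zero
    intro j _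
    rw [Matrix.transpose_apply, Qzperp]
    simp only [hc1', Fin.val_mk]
    rw [if_neg (by omega), if_neg (by omega), zero_mul]
  have hw1 : w c1 = 0 := by
    have h := heq c1
    have hz : ((fwInvJac n w)ᵀ.mulVec v) c1 = 0 := by
      rw [Matrix.mulVec]
      show (fwInvJac n w)ᵀ c1 ⬝ᵥ v = 0
      rw [dotProduct]
      apply Finset.sum_eq_zero
      intro k _
      rw [Matrix.transpose_apply]
      by_cases hk : (k : ℕ) = 1
      · have : k = c1 := Fin.ext hk
        rw [this, hv1, mul_zero]
      · rw [jac_col1_zero n hn w k hk, zero_mul]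
    rw [hz] at h
    rcases mul_eq_zero.mp h with h' | h'
    · exact absurd h' (ne_of_gt (hl c1))
    · exact h'
  refine ⟨hw1, ?_⟩
  have h := heq c0
  have hz : ((fwInvJac n w)ᵀ.mulVec v) c0 = 0 := by
    rw [Matrix.mulVec]
    show (fwInvJac n w)ᵀ c0 ⬝ᵥ v = 0
    rw [dotProduct]
    have hrw : ∀ k : Fin n, (fwInvJac n w)ᵀ c0 k * v k =
        ∑ j : Fin (n - 2), Qzperp n (fwInv n w) j k * fwInvJac n w k c0 * a j := by
      intro k
      rw [Matrix.transpose_apply, hv, Matrix.mulVec]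
      show fwInvJac n w k c0 * ((Qzperp n (fwInv n w))ᵀ k ⬝ᵥ a) = _
      rw [dotProduct, Finset.mul_sum]
      apply Finset.sum_congr rfl
      intro j _
      rw [Matrix.transpose_apply]
      ring
    rw [Finset.sum_congr rfl (fun k _ => hrw k), Finset.sum_comm]
    apply Finset.sum_eq_zero
    intro j _
    have : (∑ k : Fin n, Qzperp n (fwInv n w) j k * fwInvJac n w k c0 * a j) =
        (∑ k : Fin n, Qzperp n (fwInv n w) j k * fwInvJac n w k c0) * a j := by
      rw [Finset.sum_mul]
    rw [this, key_row n hn w j]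
    by_cases hj : (j : ℕ) = 0
    · rw [if_pos hj]
      have : w (⟨1, by omega⟩ : Fin n) = 0 := hw1
      rw [this]
      ring
    · rw [if_neg hj, zero_mul]
  rw [hz] at h
  rcases mul_eq_zero.mp h with h' | h'
  · exact absurd h' (ne_of_gt (hl c0))
  · exact h'
end
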